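/- Let R be a commutative ring, let C be a group embedded as a subgroup in groups A and B, and let G = A *_C B be the amalgamated free product (pushout in groups). Let I_A, I_B, I_C, I_G denote the augmentation ideals of RA, RB, RC, RG respectively. Then the quotient of the RG-module (I_A ⊗_{RA} RG) ⊕ (I_B ⊗_{RB} RG) by the submodule generated by all elements ((c − 1) ⊗ 1, −(c − 1) ⊗ 1) for c ∈ C is isomorphic as an RG-module to I_G. -/

import Mathlib

/-!
Shared infrastructure.  Following standard practice in Mathlib (e.g. `Rep R G`),
we work with *left* modules over the group ring `MonoidAlgebra R G`; for group
rings the categories of left and right modules are equivalent, so this is the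
usual formalization of the paper's "right `RA`-modules".
-/

universe u

namespace GP

/-- The augmentation map `RG → R`, sending each group element to `1`. -/
noncomputable def aug (R G : Type u) [CommRing R] [Group G] :
    MonoidAlgebra R G →ₐ[R] R :=
  MonoidAlgebra.lift R R G 1

/-- A projective resolution `⋯ → X n → ⋯ → X 1 → X 0 → R → 0` of the group `G`
over the commutative ring `R`: an exact sequence of projective modules over the
group ring `MonoidAlgebra R G`, with `X 0 = RG` (recorded as the isomorphism
`iso0`) and augmentation `aug R G` as the map `X 0 → R`. -/
structure Resolution (R : Type u) [CommRing R] (G : Type u) [Group G] :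
    Type (u + 1) where
  X : ℕ → Type u
  [acg : ∀ n, AddCommGroup (X n)]
  [modR : ∀ n, Module R (X n)]
  [modG : ∀ n, Module (MonoidAlgebra R G) (X n)]
  [tower : ∀ n, IsScalarTower R (MonoidAlgebra R G) (X n)]
  /-- the boundary maps -/
  d : ∀ n, X (n + 1) →ₗ[MonoidAlgebra R G] X n
  /-- every module in the resolution is projective -/
  projective : ∀ n, Module.Projective (MonoidAlgebra R G) (X n)
  /-- `X 0` is the group ring itself -/
  iso0 : X 0 ≃ₗ[MonoidAlgebra R G] MonoidAlgebra R G
  /-- exactness at `X (n+1)` -/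
  exact_succ : ∀ n, LinearMap.range (d (n + 1)) = LinearMap.ker (d n)
  /-- exactness at `X 0`, the map `X 0 → R` being the augmentation -/
  exact_zero : ∀ x : X 0, aug R G (iso0 x) = 0 ↔ x ∈ LinearMap.range (d 0)

attribute [instance] Resolution.acg Resolution.modR Resolution.modG Resolution.tower

end GP
namespace GP

universe v

section Induced

variable {S T : Type v} [Ring S] [Ring T] (φ : S →+* T)
variable (N : Type v) [AddCommMonoid N] [Module S N]

/-- The relations defining the induced module `N ⊗_S T` (for left modules,
`T ⊗_S N`): inside the free `T`-module on `N`, additivity in `N` and the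
relation `1 ⊗ (s • n) = φ s ⊗ n`. -/
noncomputable def indRels : Submodule T (N →₀ T) :=
  Submodule.span T
    ({x | ∃ n n' : N,
        x = Finsupp.single (n + n') (1 : T) - Finsupp.single n 1 - Finsupp.single n' 1} ∪
     {x | ∃ (s : S) (n : N),
        x = Finsupp.single (s • n) (1 : T) - Finsupp.single n (φ s)})

/-- The module obtained from the `S`-module `N` by induction (extension of
scalars) along `φ : S →+* T`; for group rings of a subgroup inclusion `C ≤ A`
this is the induced module `N ⊗_{RC} RA`. -/
def Induced : Type v := (N →₀ T) ⧸ indRels φ N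

noncomputable instance : AddCommGroup (Induced φ N) :=
  inferInstanceAs (AddCommGroup ((N →₀ T) ⧸ indRels φ N))

noncomputable instance : Module T (Induced φ N) :=
  inferInstanceAs (Module T ((N →₀ T) ⧸ indRels φ N))

/-- `indMk φ N n` is the element `n ⊗ 1` of the induced module. -/
noncomputable def indMk : N → Induced φ N := fun n => Submodule.Quotient.mk (Finsupp.single n 1)

variable {N} {N' : Type v} [AddCommMonoid N'] [Module S N']

/-- Functoriality of the induced module: the map `f ⊗ 1`. -/
noncomputable def indMap (f : N →ₗ[S] N') : Induced φ N →ₗ[T] Induced φ N' :=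
  Submodule.mapQ _ _ (Finsupp.lmapDomain T T f) <| by
    refine Submodule.span_le.2 ?_
    rintro x (⟨n, n', rfl⟩ | ⟨s, n, rfl⟩) <;>
      simp only [Submodule.mem_comap, map_sub, Finsupp.lmapDomain_apply,
        Finsupp.mapDomain_single, SetLike.mem_coe]
    · exact Submodule.subset_span (Or.inl ⟨f n, f n', by rw [map_add]⟩)
    · exact Submodule.subset_span (Or.inr ⟨s, f n, by rw [map_smul]⟩)

variable {M : Type v} [AddCommGroup M] [Module T M]

/-- The universal property of the induced module: an additive map `f : N → M`
into a `T`-module satisfying `f (s • n) = φ s • f n` extends uniquely to a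
`T`-linear map on the induced module. -/
noncomputable def indLift (f : N →+ M) (hf : ∀ (s : S) (n : N), f (s • n) = φ s • f n) :
    Induced φ N →ₗ[T] M :=
  Submodule.liftQ _ (Finsupp.lsum ℕ fun n => LinearMap.toSpanSingleton T M (f n)) <| by
    refine Submodule.span_le.2 ?_
    rintro x (⟨n, n', rfl⟩ | ⟨s, n, rfl⟩) <;>
      simp only [SetLike.mem_coe, LinearMap.mem_ker, map_sub, Finsupp.lsum_single,
        LinearMap.toSpanSingleton_apply, one_smul]
    · rw [f.map_add]; abel
    · rw [hf]; abel

@[simp] lemma indLift_indMk (f : N →+ M) (hf : ∀ (s : S) (n : N), f (s • n) = φ s • f n)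
    (n : N) : indLift φ f hf (indMk φ N n) = f n := by
  simp only [indLift, indMk]
  erw [Submodule.liftQ_apply, Finsupp.lsum_single, LinearMap.toSpanSingleton_apply, one_smul]

end Induced

end GP
namespace GP

universe w'

/-- `G`, together with maps `jA, jB`, is the amalgamated free product
`A *_C B`, i.e. the pushout in the category of groups of `iA : C →* A` and
`iB : C →* B`: the square commutes and the universal property holds. -/
def IsAmalgamatedProduct {C A B G : Type w'} [Group C] [Group A] [Group B] [Group G]
    (iA : C →* A) (iB : C →* B) (jA : A →* G) (jB : B →* G) : Prop :=
  jA.comp iA = jB.comp iB ∧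
  ∀ {H : Type w'} [Group H] (kA : A →* H) (kB : B →* H),
    kA.comp iA = kB.comp iB → ∃! φ : G →* H, φ.comp jA = kA ∧ φ.comp jB = kB

end GP

namespace GP

/-- The element `c - 1` of the augmentation ideal of `RA`, for `c` in (the
image in `A` of) the group `C`. -/
noncomputable def augKerElem (R : Type u) [CommRing R] {C A : Type u} [Group C] [Group A]
    (i : C →* A) (c : C) : RingHom.ker (aug R A) :=
  ⟨MonoidAlgebra.of R A (i c) - 1, by
    simp [RingHom.mem_ker, map_sub, aug, MonoidAlgebra.lift_of]⟩

end GP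

namespace GP

universe z

section AugLemmas

variable {R : Type z} [CommRing R] {G : Type z} [Group G]

lemma aug_single (g : G) (r : R) : aug R G (MonoidAlgebra.single g r) = r := by
  rw [aug, MonoidAlgebra.lift_single]
  simp

lemma aug_mapDomain {A : Type z} [Group A] (j : A →* G) (x : MonoidAlgebra R A) :
    aug R G (MonoidAlgebra.mapDomain j x) = aug R A x := by
  induction x using MonoidAlgebra.induction_linear with
  | zero => simp
  | add f g hf hg => rw [MonoidAlgebra.mapDomain_add, map_add, map_add, hf, hg]
  | single a b => rw [MonoidAlgebra.mapDomain_single, aug_single, aug_single]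

/-- The element `g - 1` of the augmentation ideal. -/
noncomputable def eE (R : Type z) [CommRing R] {G : Type z} [Group G] (g : G) :
    RingHom.ker (aug R G) :=
  ⟨MonoidAlgebra.of R G g - 1, by
    simp [RingHom.mem_ker, map_sub, aug, MonoidAlgebra.lift_of]⟩

lemma eE_coe (g : G) : (eE R g : MonoidAlgebra R G) = MonoidAlgebra.of R G g - 1 := rfl

lemma eE_cocycle (g h : G) :
    eE R (g * h) = eE R g + MonoidAlgebra.of R G g • eE R h := by
  apply Subtype.ext
  show MonoidAlgebra.of R G (g * h) - 1
      = (MonoidAlgebra.of R G g - 1) + MonoidAlgebra.of R G g * (MonoidAlgebra.of R G h - 1)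
  rw [map_mul, mul_sub, mul_one]
  abel

end AugLemmas

section DP

variable {R : Type z} [CommRing R] {G : Type z} [Group G]
  {M : Type z} [AddCommGroup M] [Module (MonoidAlgebra R G) M]

/-- The semidirect product `M ⋊ G` of a `RG`-module `M` with `G`. -/
def DP (R : Type z) [CommRing R] (G : Type z) [Group G]
    (M : Type z) [AddCommGroup M] [Module (MonoidAlgebra R G) M] := M × G

open MonoidAlgebra in
noncomputable instance : Group (DP R G M) where
  mul x y := (x.1 + of R G x.2 • y.1, x.2 * y.2)
  one := ((0 : M), (1 : G))
  inv x := (-(of R G x.2⁻¹ • x.1), x.2⁻¹)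
  mul_assoc x y z := by
    show ((x.1 + of R G x.2 • y.1) + of R G (x.2 * y.2) • z.1, (x.2 * y.2) * z.2)
      = (x.1 + of R G x.2 • (y.1 + of R G y.2 • z.1), x.2 * (y.2 * z.2))
    rw [map_mul, mul_smul, smul_add, add_assoc, mul_assoc]
  one_mul x := by
    show ((0 : M) + of R G (1 : G) • x.1, 1 * x.2) = x
    rw [map_one, one_smul, zero_add, one_mul]
    exact Prod.mk.eta
  mul_one x := by
    show (x.1 + of R G x.2 • (0 : M), x.2 * 1) = x
    rw [smul_zero, add_zero, mul_one]
    exact Prod.mk.eta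
  inv_mul_cancel x := by
    show (-(of R G x.2⁻¹ • x.1) + of R G x.2⁻¹ • x.1, x.2⁻¹ * x.2) = ((0 : M), (1 : G))
    rw [neg_add_cancel, inv_mul_cancel]

lemma DP.mul_def (x y : DP R G M) :
    x * y = (x.1 + MonoidAlgebra.of R G x.2 • y.1, x.2 * y.2) := rfl
lemma DP.one_def : (1 : DP R G M) = ((0 : M), (1 : G)) := rfl

/-- Lift of a derivation along `j` to a homomorphism into `M ⋊ G`. -/
noncomputable def DP.lift {H : Type z} [Group H] (j : H →* G) (f : H → M)
    (hf : ∀ h h', f (h * h') = f h + MonoidAlgebra.of R G (j h) • f h') :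
    H →* DP R G M where
  toFun h := (f h, j h)
  map_one' := by
    have h1 := hf 1 1
    rw [mul_one, left_eq_add, map_one, map_one, one_smul] at h1
    rw [h1, map_one]; rfl
  map_mul' h h' := by
    simp only [DP.mul_def, map_mul]
    exact Prod.ext (hf h h') rfl

@[simp] lemma DP.lift_apply {H : Type z} [Group H] (j : H →* G) (f : H → M)
    (hf : ∀ h h', f (h * h') = f h + MonoidAlgebra.of R G (j h) • f h') (h : H) :
    DP.lift j f hf h = (f h, j h) := rfl

/-- Functoriality of `M ⋊ G` in `M`. -/
noncomputable def DP.map {M' : Type z} [AddCommGroup M'] [Module (MonoidAlgebra R G) M']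
    (l : M →ₗ[MonoidAlgebra R G] M') : DP R G M →* DP R G M' where
  toFun x := (l x.1, x.2)
  map_one' := by
    show ((l (0 : M), (1 : G)) : DP R G M') = ((0 : M'), (1 : G))
    rw [map_zero]
  map_mul' x y := by
    show ((l (x.1 + MonoidAlgebra.of R G x.2 • y.1), x.2 * y.2) : DP R G M')
      = (l x.1 + MonoidAlgebra.of R G x.2 • l y.1, x.2 * y.2)
    rw [map_add, map_smul]

/-- The projection `M ⋊ G →* G`. -/
def DP.snd : DP R G M →* G where
  toFun x := x.2
  map_one' := rfl
  map_mul' _ _ := rfl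

end DP

section Psi0

variable {R : Type z} [CommRing R] {G : Type z} [Group G]
  {M : Type z} [AddCommGroup M] [Module (MonoidAlgebra R G) M]

/-- The additive map `RG → M` sending `single g r` to `r • d g`. -/
noncomputable def psi0 (d : G → M) : MonoidAlgebra R G →+ M :=
  (Finsupp.liftAddHom fun g =>
    { toFun := fun r => algebraMap R (MonoidAlgebra R G) r • d g
      map_zero' := by simp
      map_add' := fun a b => by simp only [map_add, add_smul] }).comp
    MonoidAlgebra.coeffAddEquiv.toAddMonoidHom

@[simp] lemma psi0_single (d : G → M) (g : G) (r : R) :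
    psi0 d (MonoidAlgebra.single g r) = algebraMap R (MonoidAlgebra R G) r • d g := by
  show (Finsupp.liftAddHom _) (Finsupp.single g r) = _
  rw [Finsupp.liftAddHom_apply_single]
  rfl

lemma psi0_mul_single (d : G → M)
    (hd : ∀ g h, d (g * h) = d g + MonoidAlgebra.of R G g • d h)
    (g : G) (r : R) (x : MonoidAlgebra R G) :
    psi0 d (MonoidAlgebra.single g r * x)
      = MonoidAlgebra.single g r • psi0 d x
        + algebraMap R (MonoidAlgebra R G) (r * aug R G x) • d g := by
  induction x using MonoidAlgebra.induction_linear with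
  | zero => simp
  | add f f' hf hf' =>
      rw [mul_add, map_add, map_add, hf, hf', map_add, mul_add, map_add, add_smul, smul_add]
      abel
  | single h t =>
      show psi0 d (MonoidAlgebra.single g r * MonoidAlgebra.single h t) = _
      rw [MonoidAlgebra.single_mul_single]
      have hsc : (algebraMap R (MonoidAlgebra R G) (r * t)) * MonoidAlgebra.of R G g
          = MonoidAlgebra.single g r * algebraMap R (MonoidAlgebra R G) t := by
        rw [MonoidAlgebra.single_eq_algebraMap_mul_of, mul_assoc, ← Algebra.commutes,
          ← mul_assoc, ← map_mul]
      show psi0 d (MonoidAlgebra.single (g * h) (r * t)) = _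
      rw [psi0_single, psi0_single, aug_single, hd, smul_add, smul_smul, hsc, ← smul_smul]
      exact add_comm _ _

lemma psi0_smul (d : G → M)
    (hd : ∀ g h, d (g * h) = d g + MonoidAlgebra.of R G g • d h)
    {x : MonoidAlgebra R G} (hx : aug R G x = 0) (s : MonoidAlgebra R G) :
    psi0 d (s * x) = s • psi0 d x := by
  induction s using MonoidAlgebra.induction_linear with
  | zero => rw [zero_mul, map_zero, zero_smul]
  | add f f' hf hf' => rw [add_mul, map_add, hf, hf', add_smul]
  | single g r =>
      show psi0 d (MonoidAlgebra.single g r * x) = _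
      rw [psi0_mul_single d hd, hx, mul_zero, map_zero, zero_smul, add_zero]

end Psi0

section IndMkLemmas

universe v

variable {S T : Type v} [Ring S] [Ring T] (φ : S →+* T)
variable (N : Type v) [AddCommMonoid N] [Module S N]

lemma indMk_add (n n' : N) : indMk φ N (n + n') = indMk φ N n + indMk φ N n' := by
  have h : indMk φ N n + indMk φ N n'
      = Submodule.Quotient.mk (Finsupp.single n (1 : T) + Finsupp.single n' 1) := rfl
  rw [indMk, h]
  refine (Submodule.Quotient.eq _).mpr ?_
  have h2 : Finsupp.single (n + n') (1 : T) - (Finsupp.single n 1 + Finsupp.single n' 1)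
      = Finsupp.single (n + n') (1 : T) - Finsupp.single n 1 - Finsupp.single n' 1 := by
    abel
  rw [h2]
  exact Submodule.subset_span (Or.inl ⟨n, n', rfl⟩)

lemma indMk_smul (s : S) (n : N) : indMk φ N (s • n) = φ s • indMk φ N n := by
  have h : φ s • indMk φ N n
      = Submodule.Quotient.mk (φ s • Finsupp.single n (1 : T)) := rfl
  rw [indMk, h]
  refine (Submodule.Quotient.eq _).mpr ?_
  have h2 : Finsupp.single (s • n) (1 : T) - φ s • Finsupp.single n (1 : T)
      = Finsupp.single (s • n) (1 : T) - Finsupp.single n (φ s) := by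
    rw [Finsupp.smul_single, smul_eq_mul, mul_one]
  rw [h2]
  exact Submodule.subset_span (Or.inr ⟨s, n, rfl⟩)

lemma indMk_zero : indMk φ N 0 = 0 := by
  have h := indMk_add φ N 0 0
  rw [add_zero] at h
  exact add_eq_left.mp h.symm

end IndMkLemmas

end GP

namespace GP

section Amalgam

universe y

variable (R : Type y) [CommRing R]
variable {C A B G₀ : Type y} [Group C] [Group A] [Group B] [Group G₀]
variable (iA : C →* A) (iB : C →* B) (jA : A →* G₀) (jB : B →* G₀)

/-- The submodule of relations. -/
noncomputable def amRel :
    Submodule (MonoidAlgebra R G₀)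
      (Induced (MonoidAlgebra.mapDomainRingHom R jA) (RingHom.ker (aug R A)) ×
       Induced (MonoidAlgebra.mapDomainRingHom R jB) (RingHom.ker (aug R B))) :=
  Submodule.span (MonoidAlgebra R G₀)
    {x | ∃ c : C,
      x = (indMk (MonoidAlgebra.mapDomainRingHom R jA) (RingHom.ker (aug R A))
             (augKerElem R iA c),
           - indMk (MonoidAlgebra.mapDomainRingHom R jB) (RingHom.ker (aug R B))
             (augKerElem R iB c))}

/-- The quotient module. -/
noncomputable abbrev Mq :=
  (Induced (MonoidAlgebra.mapDomainRingHom R jA) (RingHom.ker (aug R A)) ×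
   Induced (MonoidAlgebra.mapDomainRingHom R jB) (RingHom.ker (aug R B))) ⧸
    amRel R iA iB jA jB

/-- `a ↦ (a - 1) ⊗ 1` in the first summand. -/
noncomputable def dA (a : A) : Mq R iA iB jA jB :=
  Submodule.Quotient.mk
    (indMk (MonoidAlgebra.mapDomainRingHom R jA) (RingHom.ker (aug R A)) (eE R a), 0)

/-- `b ↦ (b - 1) ⊗ 1` in the second summand. -/
noncomputable def dB (b : B) : Mq R iA iB jA jB :=
  Submodule.Quotient.mk
    (0, indMk (MonoidAlgebra.mapDomainRingHom R jB) (RingHom.ker (aug R B)) (eE R b))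

lemma mapDomainRingHom_of (j : A →* G₀) (a : A) :
    MonoidAlgebra.mapDomainRingHom R j (MonoidAlgebra.of R A a)
      = MonoidAlgebra.of R G₀ (j a) := by
  simp [MonoidAlgebra.mapDomainRingHom_apply, MonoidAlgebra.of_apply,
    Finsupp.mapDomain_single]

lemma dA_cocycle (a a' : A) :
    dA R iA iB jA jB (a * a')
      = dA R iA iB jA jB a + MonoidAlgebra.of R G₀ (jA a) • dA R iA iB jA jB a' := by
  have h1 : eE R (a * a') = (MonoidAlgebra.of R A a) • eE R a' + eE R a := by rw [eE_cocycle]; exact add_comm _ _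
  rw [dA, dA, dA, h1, indMk_add, indMk_smul, mapDomainRingHom_of]
  have h3 : ((MonoidAlgebra.of R G₀ (jA a) •
        indMk (MonoidAlgebra.mapDomainRingHom R jA) (RingHom.ker (aug R A)) (eE R a')
        + indMk (MonoidAlgebra.mapDomainRingHom R jA) (RingHom.ker (aug R A)) (eE R a),
        (0 : Induced (MonoidAlgebra.mapDomainRingHom R jB) (RingHom.ker (aug R B)))))
      = (indMk (MonoidAlgebra.mapDomainRingHom R jA) (RingHom.ker (aug R A)) (eE R a), 0)
        + MonoidAlgebra.of R G₀ (jA a) •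
          (indMk (MonoidAlgebra.mapDomainRingHom R jA) (RingHom.ker (aug R A)) (eE R a'), 0) := by
    refine Prod.ext ?_ ?_ <;> simp [add_comm]
  rw [h3, Submodule.Quotient.mk_add, Submodule.Quotient.mk_smul]

lemma dB_cocycle (b b' : B) :
    dB R iA iB jA jB (b * b')
      = dB R iA iB jA jB b + MonoidAlgebra.of R G₀ (jB b) • dB R iA iB jA jB b' := by
  have h1 : eE R (b * b') = (MonoidAlgebra.of R B b) • eE R b' + eE R b := by rw [eE_cocycle]; exact add_comm _ _
  rw [dB, dB, dB, h1, indMk_add, indMk_smul, mapDomainRingHom_of]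
  have h3 : (((0 : Induced (MonoidAlgebra.mapDomainRingHom R jA) (RingHom.ker (aug R A))),
        MonoidAlgebra.of R G₀ (jB b) •
        indMk (MonoidAlgebra.mapDomainRingHom R jB) (RingHom.ker (aug R B)) (eE R b')
        + indMk (MonoidAlgebra.mapDomainRingHom R jB) (RingHom.ker (aug R B)) (eE R b)))
      = (0, indMk (MonoidAlgebra.mapDomainRingHom R jB) (RingHom.ker (aug R B)) (eE R b))
        + MonoidAlgebra.of R G₀ (jB b) •
          (0, indMk (MonoidAlgebra.mapDomainRingHom R jB) (RingHom.ker (aug R B)) (eE R b')) := by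
    refine Prod.ext ?_ ?_ <;> simp [add_comm]
  rw [h3, Submodule.Quotient.mk_add, Submodule.Quotient.mk_smul]

/-- The additive map `I_A → I_{G₀}` induced by `jA`. -/
noncomputable def fInd (j : A →* G₀) : (RingHom.ker (aug R A)) →+ (RingHom.ker (aug R G₀)) where
  toFun n := ⟨MonoidAlgebra.mapDomainRingHom R j n.1, by
    rw [RingHom.mem_ker]
    show aug R G₀ (MonoidAlgebra.mapDomain j n.1) = 0
    rw [aug_mapDomain]
    exact RingHom.mem_ker.mp n.2⟩
  map_zero' := Subtype.ext (map_zero (MonoidAlgebra.mapDomainRingHom R j))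
  map_add' x y := Subtype.ext (by
    show MonoidAlgebra.mapDomainRingHom R j (x.1 + y.1) = _
    rw [map_add]; rfl)

lemma fInd_smul (j : A →* G₀) (s : MonoidAlgebra R A) (n : RingHom.ker (aug R A)) :
    fInd R j (s • n) = MonoidAlgebra.mapDomainRingHom R j s • fInd R j n := by
  apply Subtype.ext
  show MonoidAlgebra.mapDomainRingHom R j (s * n.1)
    = MonoidAlgebra.mapDomainRingHom R j s * MonoidAlgebra.mapDomainRingHom R j n.1
  rw [map_mul]

lemma fInd_eE (j : A →* G₀) (a : A) : fInd R j (eE R a) = eE R (j a) := by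
  apply Subtype.ext
  show MonoidAlgebra.mapDomainRingHom R j (MonoidAlgebra.of R A a - 1)
    = MonoidAlgebra.of R G₀ (j a) - 1
  rw [map_sub, map_one, mapDomainRingHom_of]

/-- The map `Φ` from the quotient to the augmentation ideal of `RG₀`. -/
noncomputable def Phi (hcomm : jA.comp iA = jB.comp iB) :
    Mq R iA iB jA jB →ₗ[MonoidAlgebra R G₀] RingHom.ker (aug R G₀) :=
  Submodule.liftQ _
    ((indLift (MonoidAlgebra.mapDomainRingHom R jA) (fInd R jA) (fInd_smul R jA)).coprod
     (indLift (MonoidAlgebra.mapDomainRingHom R jB) (fInd R jB) (fInd_smul R jB)))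
    (by
      rw [amRel, Submodule.span_le]
      rintro x ⟨c, rfl⟩
      simp only [SetLike.mem_coe, LinearMap.mem_ker, LinearMap.coprod_apply, map_neg]
      have hA : (augKerElem R iA c : RingHom.ker (aug R A)) = eE R (iA c) := rfl
      have hB : (augKerElem R iB c : RingHom.ker (aug R B)) = eE R (iB c) := rfl
      rw [hA, hB, indLift_indMk, indLift_indMk, fInd_eE, fInd_eE,
        show jA (iA c) = jB (iB c) from DFunLike.congr_fun hcomm c]
      exact add_neg_cancel _)

lemma Phi_dA (hcomm : jA.comp iA = jB.comp iB) (a : A) :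
    Phi R iA iB jA jB hcomm (dA R iA iB jA jB a) = eE R (jA a) := by
  rw [Phi, dA, Submodule.liftQ_apply, LinearMap.coprod_apply, map_zero, add_zero,
    indLift_indMk, fInd_eE]

lemma Phi_dB (hcomm : jA.comp iA = jB.comp iB) (b : B) :
    Phi R iA iB jA jB hcomm (dB R iA iB jA jB b) = eE R (jB b) := by
  rw [Phi, dB, Submodule.liftQ_apply, LinearMap.coprod_apply, map_zero, zero_add,
    indLift_indMk, fInd_eE]

end Amalgam

end GP

/-!
STATEMENT 2: let `G₀ = A *_C B` (the pushout of the injections `iA : C →* A`,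
`iB : C →* B`) and let `I_A, I_B, I_G` be the augmentation ideals (kernels of
the augmentations of the group rings).  Then the quotient of
`(I_A ⊗_{RA} RG₀) ⊕ (I_B ⊗_{RB} RG₀)` by the submodule generated by the
elements `((c - 1) ⊗ 1, -(c - 1) ⊗ 1)`, `c ∈ C`, is isomorphic to `I_{G₀}` as
an `RG₀`-module.
-/

open GP

set_option maxHeartbeats 2000000 in

theorem augmentation_ideal_of_amalgam
    {R : Type u} [CommRing R]
    {C A B G₀ : Type u} [Group C] [Group A] [Group B] [Group G₀]
    (iA : C →* A) (iB : C →* B) (jA : A →* G₀) (jB : B →* G₀)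
    (hiA : Function.Injective iA) (hiB : Function.Injective iB)
    (hpush : IsAmalgamatedProduct iA iB jA jB) :
    Nonempty
      (((Induced (MonoidAlgebra.mapDomainRingHom R jA) (RingHom.ker (aug R A)) ×
         Induced (MonoidAlgebra.mapDomainRingHom R jB) (RingHom.ker (aug R B))) ⧸
        Submodule.span (MonoidAlgebra R G₀)
          {x | ∃ c : C,
            x = (indMk (MonoidAlgebra.mapDomainRingHom R jA) (RingHom.ker (aug R A))
                   (augKerElem R iA c),
                 - indMk (MonoidAlgebra.mapDomainRingHom R jB) (RingHom.ker (aug R B))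
                   (augKerElem R iB c))})
        ≃ₗ[MonoidAlgebra R G₀] RingHom.ker (aug R G₀)) := by
  classical
  obtain ⟨hcomm, huniv⟩ := hpush
  -- homomorphisms into the semidirect product M ⋊ G₀
  let kA : A →* DP R G₀ (Mq R iA iB jA jB) :=
    DP.lift jA (dA R iA iB jA jB) (dA_cocycle R iA iB jA jB)
  let kB : B →* DP R G₀ (Mq R iA iB jA jB) :=
    DP.lift jB (dB R iA iB jA jB) (dB_cocycle R iA iB jA jB)
  have hk : kA.comp iA = kB.comp iB := by
    ext c
    show ((dA R iA iB jA jB (iA c), jA (iA c)) : DP R G₀ (Mq R iA iB jA jB))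
      = (dB R iA iB jA jB (iB c), jB (iB c))
    refine Prod.ext ?_ (DFunLike.congr_fun hcomm c)
    rw [dA, dB, ← sub_eq_zero, ← Submodule.Quotient.mk_sub, Submodule.Quotient.mk_eq_zero,
      amRel]
    refine Submodule.subset_span ⟨c, ?_⟩
    refine Prod.ext ?_ ?_ <;> simp <;> rfl
  obtain ⟨φ, ⟨hφA, hφB⟩, -⟩ := huniv kA kB hk
  have hsnd : ∀ g, (φ g).2 = g := by
    obtain ⟨θ, -, hθ⟩ := huniv jA jB hcomm
    have h1 : DP.snd.comp φ = θ := by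
      refine hθ _ ⟨?_, ?_⟩
      · ext a; exact congrArg Prod.snd (DFunLike.congr_fun hφA a)
      · ext b; exact congrArg Prod.snd (DFunLike.congr_fun hφB b)
    have h2 : MonoidHom.id G₀ = θ := hθ _ ⟨MonoidHom.id_comp jA, MonoidHom.id_comp jB⟩
    intro g
    exact DFunLike.congr_fun (h1.trans h2.symm) g
  set d : G₀ → Mq R iA iB jA jB := fun g => (φ g).1 with hddef
  have hd : ∀ g h, d (g * h) = d g + MonoidAlgebra.of R G₀ g • d h := by
    intro g h
    have h1 := congrArg Prod.fst (map_mul φ g h)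
    rw [DP.mul_def] at h1
    show (φ (g * h)).1 = (φ g).1 + MonoidAlgebra.of R G₀ g • (φ h).1
    rw [h1, hsnd g]
  have hdjA : ∀ a, d (jA a) = dA R iA iB jA jB a := fun a =>
    congrArg Prod.fst (DFunLike.congr_fun hφA a)
  have hdjB : ∀ b, d (jB b) = dB R iA iB jA jB b := fun b =>
    congrArg Prod.fst (DFunLike.congr_fun hφB b)
  have hd1 : d 1 = 0 := congrArg Prod.fst (map_one φ)
  -- Φ ∘ d is g ↦ g - 1
  have hPhid : ∀ g, Phi R iA iB jA jB hcomm (d g) = eE R g := by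
    let σ : G₀ →* DP R G₀ (RingHom.ker (aug R G₀)) :=
      DP.lift (MonoidHom.id G₀) (eE R) (fun g h => eE_cocycle g h)
    let ρ := (DP.map (Phi R iA iB jA jB hcomm)).comp φ
    have hσ : (σ.comp jA).comp iA = (σ.comp jB).comp iB := by
      rw [MonoidHom.comp_assoc, MonoidHom.comp_assoc, hcomm]
    obtain ⟨θ, -, hθ⟩ := huniv (σ.comp jA) (σ.comp jB) hσ
    have hρA : ρ.comp jA = σ.comp jA := by
      ext a
      show DP.map (Phi R iA iB jA jB hcomm) (φ (jA a)) = σ (jA a)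
      have hka := DFunLike.congr_fun hφA a
      simp only [MonoidHom.comp_apply] at hka
      rw [hka]
      show ((Phi R iA iB jA jB hcomm (dA R iA iB jA jB a), jA a) :
        DP R G₀ (RingHom.ker (aug R G₀))) = (eE R (jA a), jA a)
      rw [Phi_dA]
    have hρB : ρ.comp jB = σ.comp jB := by
      ext b
      show DP.map (Phi R iA iB jA jB hcomm) (φ (jB b)) = σ (jB b)
      have hkb := DFunLike.congr_fun hφB b
      simp only [MonoidHom.comp_apply] at hkb
      rw [hkb]
      show ((Phi R iA iB jA jB hcomm (dB R iA iB jA jB b), jB b) :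
        DP R G₀ (RingHom.ker (aug R G₀))) = (eE R (jB b), jB b)
      rw [Phi_dB]
    have hρσ : ρ = σ := (hθ ρ ⟨hρA, hρB⟩).trans (hθ σ ⟨rfl, rfl⟩).symm
    intro g
    exact congrArg Prod.fst (DFunLike.congr_fun hρσ g)
  -- the map Ψ : I_{G₀} → Mq
  let Ψ : RingHom.ker (aug R G₀) →ₗ[MonoidAlgebra R G₀] Mq R iA iB jA jB :=
    { toFun := fun x => psi0 d x.1
      map_add' := fun x y => by
        show psi0 d ((x : MonoidAlgebra R G₀) + (y : MonoidAlgebra R G₀)) = _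
        rw [map_add]
      map_smul' := fun s x => by
        show psi0 d (s * (x : MonoidAlgebra R G₀)) = s • psi0 d x.1
        exact psi0_smul d hd (RingHom.mem_ker.mp x.2) s }
  have hΨ_apply : ∀ x : RingHom.ker (aug R G₀), Ψ x = psi0 d x.1 := fun x => rfl
  have hΨeE : ∀ g, Ψ (eE R g) = d g := by
    intro g
    rw [hΨ_apply]
    show psi0 d (MonoidAlgebra.of R G₀ g - 1) = d g
    rw [map_sub]
    have h1 : (MonoidAlgebra.of R G₀ g : MonoidAlgebra R G₀) = MonoidAlgebra.single g 1 := rfl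
    have h2 : (1 : MonoidAlgebra R G₀) = MonoidAlgebra.single 1 1 := rfl
    rw [h1, h2, psi0_single, psi0_single, hd1, smul_zero, sub_zero, map_one, one_smul]
  -- injectivity
  have hPhiPsi : ∀ y : MonoidAlgebra R G₀,
      ((Phi R iA iB jA jB hcomm (psi0 d y)) : MonoidAlgebra R G₀)
        = y - algebraMap R (MonoidAlgebra R G₀) (aug R G₀ y) := by
    intro y
    induction y using MonoidAlgebra.induction_linear with
    | zero => simp
    | add f f' hf hf' =>
        rw [map_add, map_add, Submodule.coe_add, hf, hf', map_add, map_add]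
        exact sub_add_sub_comm _ _ _ _
    | single g r =>
        rw [psi0_single, map_smul, hPhid, aug_single]
        show algebraMap R (MonoidAlgebra R G₀) r • (MonoidAlgebra.of R G₀ g - 1) = _
        rw [smul_eq_mul, mul_sub, mul_one, ← MonoidAlgebra.single_eq_algebraMap_mul_of]
  have hinj : Function.Injective Ψ := by
    intro x y hxy
    apply Subtype.ext
    have hx := hPhiPsi x.1
    have hy := hPhiPsi y.1
    rw [RingHom.mem_ker.mp x.2, map_zero, sub_zero] at hx
    rw [RingHom.mem_ker.mp y.2, map_zero, sub_zero] at hy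
    rw [← hx, ← hy, ← hΨ_apply, ← hΨ_apply, hxy]
  -- surjectivity
  have haux : ∀ {H : Type u} (_ : Group H) (x : MonoidAlgebra R H),
      x - algebraMap R (MonoidAlgebra R H) (aug R H x) ∈ RingHom.ker (aug R H) := by
    intro H _ x
    rw [RingHom.mem_ker, map_sub, AlgHom.commutes]
    simp
  have hkeyA : ∀ x : MonoidAlgebra R A,
      (Submodule.Quotient.mk
        (indMk (MonoidAlgebra.mapDomainRingHom R jA) (RingHom.ker (aug R A))
          ⟨x - algebraMap R (MonoidAlgebra R A) (aug R A x), haux _ x⟩, 0) : Mq R iA iB jA jB)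
        ∈ LinearMap.range Ψ := by
    intro x
    induction x using MonoidAlgebra.induction_on with
    | of a =>
        have hone : (⟨MonoidAlgebra.of R A a
              - algebraMap R (MonoidAlgebra R A) (aug R A (MonoidAlgebra.of R A a)),
              haux _ _⟩ : RingHom.ker (aug R A)) = eE R a := by
          apply Subtype.ext
          show MonoidAlgebra.of R A a
              - algebraMap R (MonoidAlgebra R A) (aug R A (MonoidAlgebra.of R A a))
            = MonoidAlgebra.of R A a - 1
          rw [show aug R A (MonoidAlgebra.of R A a) = (1 : R) from aug_single a 1, map_one]
        rw [hone]
        have : (Submodule.Quotient.mk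
            (indMk (MonoidAlgebra.mapDomainRingHom R jA) (RingHom.ker (aug R A)) (eE R a), 0) :
            Mq R iA iB jA jB) = Ψ (eE R (jA a)) := by
          rw [hΨeE, hdjA, dA]
        rw [this]
        exact LinearMap.mem_range_self _ _
    | add f f' hf hf' =>
        have hsplit : (⟨(f + f') - algebraMap R (MonoidAlgebra R A) (aug R A (f + f')),
            haux _ _⟩ : RingHom.ker (aug R A))
            = ⟨f - algebraMap R (MonoidAlgebra R A) (aug R A f), haux _ f⟩
              + ⟨f' - algebraMap R (MonoidAlgebra R A) (aug R A f'), haux _ f'⟩ := by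
          apply Subtype.ext
          show (f + f') - algebraMap R (MonoidAlgebra R A) (aug R A (f + f'))
            = (f - algebraMap R (MonoidAlgebra R A) (aug R A f))
              + (f' - algebraMap R (MonoidAlgebra R A) (aug R A f'))
          rw [map_add, map_add]
          exact (sub_add_sub_comm _ _ _ _).symm
        rw [hsplit, indMk_add]
        have hpr : ((indMk (MonoidAlgebra.mapDomainRingHom R jA) (RingHom.ker (aug R A))
              ⟨f - algebraMap R (MonoidAlgebra R A) (aug R A f), haux _ f⟩
            + indMk (MonoidAlgebra.mapDomainRingHom R jA) (RingHom.ker (aug R A))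
              ⟨f' - algebraMap R (MonoidAlgebra R A) (aug R A f'), haux _ f'⟩,
            (0 : Induced (MonoidAlgebra.mapDomainRingHom R jB) (RingHom.ker (aug R B)))))
            = (indMk (MonoidAlgebra.mapDomainRingHom R jA) (RingHom.ker (aug R A))
                ⟨f - algebraMap R (MonoidAlgebra R A) (aug R A f), haux _ f⟩, 0)
              + (indMk (MonoidAlgebra.mapDomainRingHom R jA) (RingHom.ker (aug R A))
                ⟨f' - algebraMap R (MonoidAlgebra R A) (aug R A f'), haux _ f'⟩, 0) := by
          refine Prod.ext rfl ?_
          simp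
        rw [hpr, Submodule.Quotient.mk_add]
        exact add_mem hf hf'
    | smul r x hx =>
        have hone : (⟨r • x - algebraMap R (MonoidAlgebra R A) (aug R A (r • x)),
              haux _ _⟩ : RingHom.ker (aug R A))
            = algebraMap R (MonoidAlgebra R A) r •
              (⟨x - algebraMap R (MonoidAlgebra R A) (aug R A x), haux _ x⟩ :
                RingHom.ker (aug R A)) := by
          apply Subtype.ext
          show r • x - algebraMap R (MonoidAlgebra R A) (aug R A (r • x))
            = algebraMap R (MonoidAlgebra R A) r *
                (x - algebraMap R (MonoidAlgebra R A) (aug R A x))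
          rw [map_smul, mul_sub, ← map_mul, ← Algebra.smul_def, smul_eq_mul]
        rw [hone, indMk_smul]
        have hpr : ((MonoidAlgebra.mapDomainRingHom R jA (algebraMap R (MonoidAlgebra R A) r) •
              indMk (MonoidAlgebra.mapDomainRingHom R jA) (RingHom.ker (aug R A))
                ⟨x - algebraMap R (MonoidAlgebra R A) (aug R A x), haux _ x⟩,
            (0 : Induced (MonoidAlgebra.mapDomainRingHom R jB) (RingHom.ker (aug R B)))))
            = MonoidAlgebra.mapDomainRingHom R jA (algebraMap R (MonoidAlgebra R A) r) •
              (indMk (MonoidAlgebra.mapDomainRingHom R jA) (RingHom.ker (aug R A))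
                ⟨x - algebraMap R (MonoidAlgebra R A) (aug R A x), haux _ x⟩, 0) := by
          refine Prod.ext rfl ?_
          simp
        rw [hpr, Submodule.Quotient.mk_smul]
        exact Submodule.smul_mem _ _ hx
  have hkeyB : ∀ x : MonoidAlgebra R B,
      (Submodule.Quotient.mk
        (0, indMk (MonoidAlgebra.mapDomainRingHom R jB) (RingHom.ker (aug R B))
          ⟨x - algebraMap R (MonoidAlgebra R B) (aug R B x), haux _ x⟩) : Mq R iA iB jA jB)
        ∈ LinearMap.range Ψ := by
    intro x
    induction x using MonoidAlgebra.induction_on with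
    | of a =>
        have hone : (⟨MonoidAlgebra.of R B a
              - algebraMap R (MonoidAlgebra R B) (aug R B (MonoidAlgebra.of R B a)),
              haux _ _⟩ : RingHom.ker (aug R B)) = eE R a := by
          apply Subtype.ext
          show MonoidAlgebra.of R B a
              - algebraMap R (MonoidAlgebra R B) (aug R B (MonoidAlgebra.of R B a))
            = MonoidAlgebra.of R B a - 1
          rw [show aug R B (MonoidAlgebra.of R B a) = (1 : R) from aug_single a 1, map_one]
        rw [hone]
        have : (Submodule.Quotient.mk
            (0, indMk (MonoidAlgebra.mapDomainRingHom R jB) (RingHom.ker (aug R B)) (eE R a)) :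
            Mq R iA iB jA jB) = Ψ (eE R (jB a)) := by
          rw [hΨeE, hdjB, dB]
        rw [this]
        exact LinearMap.mem_range_self _ _
    | add f f' hf hf' =>
        have hsplit : (⟨(f + f') - algebraMap R (MonoidAlgebra R B) (aug R B (f + f')),
            haux _ _⟩ : RingHom.ker (aug R B))
            = ⟨f - algebraMap R (MonoidAlgebra R B) (aug R B f), haux _ f⟩
              + ⟨f' - algebraMap R (MonoidAlgebra R B) (aug R B f'), haux _ f'⟩ := by
          apply Subtype.ext
          show (f + f') - algebraMap R (MonoidAlgebra R B) (aug R B (f + f'))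
            = (f - algebraMap R (MonoidAlgebra R B) (aug R B f))
              + (f' - algebraMap R (MonoidAlgebra R B) (aug R B f'))
          rw [map_add, map_add]
          exact (sub_add_sub_comm _ _ _ _).symm
        rw [hsplit, indMk_add]
        have hpr : (((0 : Induced (MonoidAlgebra.mapDomainRingHom R jA) (RingHom.ker (aug R A))),
            indMk (MonoidAlgebra.mapDomainRingHom R jB) (RingHom.ker (aug R B))
              ⟨f - algebraMap R (MonoidAlgebra R B) (aug R B f), haux _ f⟩
            + indMk (MonoidAlgebra.mapDomainRingHom R jB) (RingHom.ker (aug R B))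
              ⟨f' - algebraMap R (MonoidAlgebra R B) (aug R B f'), haux _ f'⟩))
            = (0, indMk (MonoidAlgebra.mapDomainRingHom R jB) (RingHom.ker (aug R B))
                ⟨f - algebraMap R (MonoidAlgebra R B) (aug R B f), haux _ f⟩)
              + (0, indMk (MonoidAlgebra.mapDomainRingHom R jB) (RingHom.ker (aug R B))
                ⟨f' - algebraMap R (MonoidAlgebra R B) (aug R B f'), haux _ f'⟩) := by
          refine Prod.ext ?_ rfl
          simp
        rw [hpr, Submodule.Quotient.mk_add]
        exact add_mem hf hf'
    | smul r x hx =>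
        have hone : (⟨r • x - algebraMap R (MonoidAlgebra R B) (aug R B (r • x)),
              haux _ _⟩ : RingHom.ker (aug R B))
            = algebraMap R (MonoidAlgebra R B) r •
              (⟨x - algebraMap R (MonoidAlgebra R B) (aug R B x), haux _ x⟩ :
                RingHom.ker (aug R B)) := by
          apply Subtype.ext
          show r • x - algebraMap R (MonoidAlgebra R B) (aug R B (r • x))
            = algebraMap R (MonoidAlgebra R B) r *
                (x - algebraMap R (MonoidAlgebra R B) (aug R B x))
          rw [map_smul, mul_sub, ← map_mul, ← Algebra.smul_def, smul_eq_mul]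
        rw [hone, indMk_smul]
        have hpr : (((0 : Induced (MonoidAlgebra.mapDomainRingHom R jA) (RingHom.ker (aug R A))),
            MonoidAlgebra.mapDomainRingHom R jB (algebraMap R (MonoidAlgebra R B) r) •
              indMk (MonoidAlgebra.mapDomainRingHom R jB) (RingHom.ker (aug R B))
                ⟨x - algebraMap R (MonoidAlgebra R B) (aug R B x), haux _ x⟩))
            = MonoidAlgebra.mapDomainRingHom R jB (algebraMap R (MonoidAlgebra R B) r) •
              (0, indMk (MonoidAlgebra.mapDomainRingHom R jB) (RingHom.ker (aug R B))
                ⟨x - algebraMap R (MonoidAlgebra R B) (aug R B x), haux _ x⟩) := by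
          refine Prod.ext ?_ rfl
          simp
        rw [hpr, Submodule.Quotient.mk_smul]
        exact Submodule.smul_mem _ _ hx
  have hmkA : ∀ n : RingHom.ker (aug R A),
      (Submodule.Quotient.mk
        (indMk (MonoidAlgebra.mapDomainRingHom R jA) (RingHom.ker (aug R A)) n, 0) :
        Mq R iA iB jA jB) ∈ LinearMap.range Ψ := by
    intro n
    have h := hkeyA n.1
    have hn : (⟨n.1 - algebraMap R (MonoidAlgebra R A) (aug R A n.1), haux _ n.1⟩ :
        RingHom.ker (aug R A)) = n := by
      apply Subtype.ext
      show n.1 - algebraMap R (MonoidAlgebra R A) (aug R A n.1) = n.1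
      rw [RingHom.mem_ker.mp n.2, map_zero, sub_zero]
    rwa [hn] at h
  have hmkB : ∀ n : RingHom.ker (aug R B),
      (Submodule.Quotient.mk
        (0, indMk (MonoidAlgebra.mapDomainRingHom R jB) (RingHom.ker (aug R B)) n) :
        Mq R iA iB jA jB) ∈ LinearMap.range Ψ := by
    intro n
    have h := hkeyB n.1
    have hn : (⟨n.1 - algebraMap R (MonoidAlgebra R B) (aug R B n.1), haux _ n.1⟩ :
        RingHom.ker (aug R B)) = n := by
      apply Subtype.ext
      show n.1 - algebraMap R (MonoidAlgebra R B) (aug R B n.1) = n.1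
      rw [RingHom.mem_ker.mp n.2, map_zero, sub_zero]
    rwa [hn] at h
  have hsurj : Function.Surjective Ψ := by
    have hA : ∀ u : Induced (MonoidAlgebra.mapDomainRingHom R jA) (RingHom.ker (aug R A)),
        (Submodule.Quotient.mk (u, 0) : Mq R iA iB jA jB) ∈ LinearMap.range Ψ := by
      intro u
      obtain ⟨q, rfl⟩ := Submodule.Quotient.mk_surjective
        (indRels (MonoidAlgebra.mapDomainRingHom R jA) (RingHom.ker (aug R A))) u
      induction q using Finsupp.induction_linear with
      | zero =>
          have h1 : (Submodule.Quotient.mk (0 : (RingHom.ker (aug R A)) →₀ MonoidAlgebra R G₀) :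
              Induced (MonoidAlgebra.mapDomainRingHom R jA) (RingHom.ker (aug R A))) = 0 :=
            Submodule.Quotient.mk_zero _
          rw [h1]
          have h2 : ((0, 0) : Induced (MonoidAlgebra.mapDomainRingHom R jA) (RingHom.ker (aug R A)) ×
              Induced (MonoidAlgebra.mapDomainRingHom R jB) (RingHom.ker (aug R B))) = 0 := rfl
          erw [h2, Submodule.Quotient.mk_zero]
          exact zero_mem _
      | add f f' hf hf' =>
          have h1 : (Submodule.Quotient.mk (f + f') :
              Induced (MonoidAlgebra.mapDomainRingHom R jA) (RingHom.ker (aug R A)))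
              = Submodule.Quotient.mk f + Submodule.Quotient.mk f' :=
            Submodule.Quotient.mk_add _
          rw [h1]
          have h2 : ((Submodule.Quotient.mk f + Submodule.Quotient.mk f',
              (0 : Induced (MonoidAlgebra.mapDomainRingHom R jB) (RingHom.ker (aug R B)))) :
              Induced (MonoidAlgebra.mapDomainRingHom R jA) (RingHom.ker (aug R A)) × _)
              = ((Submodule.Quotient.mk f : Induced _ _), 0)
                + ((Submodule.Quotient.mk f' : Induced _ _), 0) := by
            refine Prod.ext rfl ?_; exact (add_zero _).symm
          erw [h2, Submodule.Quotient.mk_add]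
          exact add_mem hf hf'
      | single n t =>
          have h1 : (Finsupp.single n t : (RingHom.ker (aug R A)) →₀ MonoidAlgebra R G₀)
              = t • Finsupp.single n 1 := by
            rw [Finsupp.smul_single, smul_eq_mul, mul_one]
          have h2 : (Submodule.Quotient.mk (Finsupp.single n t) :
              Induced (MonoidAlgebra.mapDomainRingHom R jA) (RingHom.ker (aug R A)))
              = t • indMk (MonoidAlgebra.mapDomainRingHom R jA) (RingHom.ker (aug R A)) n := by
            rw [h1, indMk]
            exact Submodule.Quotient.mk_smul _ _ _
          rw [h2]
          have h3 : ((t • indMk (MonoidAlgebra.mapDomainRingHom R jA) (RingHom.ker (aug R A)) n,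
              (0 : Induced (MonoidAlgebra.mapDomainRingHom R jB) (RingHom.ker (aug R B)))) : _ × _)
              = t • (indMk (MonoidAlgebra.mapDomainRingHom R jA) (RingHom.ker (aug R A)) n, 0) := by
            refine Prod.ext rfl ?_; simp
          rw [h3, Submodule.Quotient.mk_smul]
          exact Submodule.smul_mem _ _ (hmkA n)
    have hB : ∀ v : Induced (MonoidAlgebra.mapDomainRingHom R jB) (RingHom.ker (aug R B)),
        (Submodule.Quotient.mk (0, v) : Mq R iA iB jA jB) ∈ LinearMap.range Ψ := by
      intro v
      obtain ⟨q, rfl⟩ := Submodule.Quotient.mk_surjective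
        (indRels (MonoidAlgebra.mapDomainRingHom R jB) (RingHom.ker (aug R B))) v
      induction q using Finsupp.induction_linear with
      | zero =>
          have h1 : (Submodule.Quotient.mk (0 : (RingHom.ker (aug R B)) →₀ MonoidAlgebra R G₀) :
              Induced (MonoidAlgebra.mapDomainRingHom R jB) (RingHom.ker (aug R B))) = 0 :=
            Submodule.Quotient.mk_zero _
          rw [h1]
          have h2 : ((0, 0) : Induced (MonoidAlgebra.mapDomainRingHom R jA) (RingHom.ker (aug R A)) ×
              Induced (MonoidAlgebra.mapDomainRingHom R jB) (RingHom.ker (aug R B))) = 0 := rfl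
          erw [h2, Submodule.Quotient.mk_zero]
          exact zero_mem _
      | add f f' hf hf' =>
          have h1 : (Submodule.Quotient.mk (f + f') :
              Induced (MonoidAlgebra.mapDomainRingHom R jB) (RingHom.ker (aug R B)))
              = Submodule.Quotient.mk f + Submodule.Quotient.mk f' :=
            Submodule.Quotient.mk_add _
          rw [h1]
          have h2 : (((0 : Induced (MonoidAlgebra.mapDomainRingHom R jA) (RingHom.ker (aug R A))),
              (Submodule.Quotient.mk f :
                Induced (MonoidAlgebra.mapDomainRingHom R jB) (RingHom.ker (aug R B)))
              + (Submodule.Quotient.mk f' :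
                Induced (MonoidAlgebra.mapDomainRingHom R jB) (RingHom.ker (aug R B)))) : _ × _)
              = (0, (Submodule.Quotient.mk f :
                  Induced (MonoidAlgebra.mapDomainRingHom R jB) (RingHom.ker (aug R B))))
                + (0, (Submodule.Quotient.mk f' :
                  Induced (MonoidAlgebra.mapDomainRingHom R jB) (RingHom.ker (aug R B)))) := by
            refine Prod.ext ?_ rfl; simp
          erw [h2, Submodule.Quotient.mk_add]
          exact add_mem hf hf'
      | single n t =>
          have h1 : (Finsupp.single n t : (RingHom.ker (aug R B)) →₀ MonoidAlgebra R G₀)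
              = t • Finsupp.single n 1 := by
            rw [Finsupp.smul_single, smul_eq_mul, mul_one]
          have h2 : (Submodule.Quotient.mk (Finsupp.single n t) :
              Induced (MonoidAlgebra.mapDomainRingHom R jB) (RingHom.ker (aug R B)))
              = t • indMk (MonoidAlgebra.mapDomainRingHom R jB) (RingHom.ker (aug R B)) n := by
            rw [h1, indMk]
            exact Submodule.Quotient.mk_smul _ _ _
          rw [h2]
          have h3 : (((0 : Induced (MonoidAlgebra.mapDomainRingHom R jA) (RingHom.ker (aug R A))),
              t • indMk (MonoidAlgebra.mapDomainRingHom R jB) (RingHom.ker (aug R B)) n) : _ × _)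
              = t • (0, indMk (MonoidAlgebra.mapDomainRingHom R jB) (RingHom.ker (aug R B)) n) := by
            refine Prod.ext ?_ rfl; simp
          rw [h3, Submodule.Quotient.mk_smul]
          exact Submodule.smul_mem _ _ (hmkB n)
    intro m
    obtain ⟨p, rfl⟩ := Submodule.Quotient.mk_surjective _ m
    obtain ⟨p1, p2⟩ := p
    have hsplit : (Submodule.Quotient.mk (p1, p2) : Mq R iA iB jA jB)
        = Submodule.Quotient.mk (p1, 0) + Submodule.Quotient.mk (0, p2) := by
      rw [← Submodule.Quotient.mk_add]
      congr 1
      refine Prod.ext ?_ ?_ <;> simp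
    have hm : (Submodule.Quotient.mk (p1, p2) : Mq R iA iB jA jB) ∈ LinearMap.range Ψ := by
      rw [hsplit]
      exact add_mem (hA p1) (hB p2)
    obtain ⟨x, hx⟩ := hm
    exact ⟨x, hx⟩
  exact ⟨(LinearEquiv.ofBijective Ψ ⟨hinj, hsurj⟩).symm⟩
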